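/- Let γ : Z₁ → Z₂ be a morphism of F-analytic manifolds over a non-Archimedean local field, with μᵢ nowhere-vanishing smooth measures on Zᵢ. Assume that for every nonnegative f ∈ C_c^∞(Z₁), the Radon–Nikodym derivative γ_*(f μ₁)/μ₂ belongs to L^p(Z₂) for all p < ∞. Then for any ε > 0 and any nonnegative g ∈ L^{1+ε}(Z₂), the pullback γ^*(g) = g ∘ γ belongs to L¹_loc(Z₁). -/

import Mathlib

open MeasureTheory
open scoped ENNReal

theorem stmt14 {Z1 Z2 : Type*}
    [TopologicalSpace Z1] [LocallyCompactSpace Z1] [T2Space Z1] [TotallyDisconnectedSpace Z1]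
    [MeasurableSpace Z1] [BorelSpace Z1]
    [TopologicalSpace Z2] [LocallyCompactSpace Z2] [T2Space Z2] [TotallyDisconnectedSpace Z2]
    [MeasurableSpace Z2] [BorelSpace Z2]
    (μ₁ : Measure Z1) (μ₂ : Measure Z2) [μ₁.Regular] [μ₂.Regular]
    (hμ₁pos : ∀ U : Set Z1, IsOpen U → U.Nonempty → 0 < μ₁ U)
    (hμ₁fin : ∀ K : Set Z1, IsCompact K → μ₁ K < ⊤)
    (hμ₂pos : ∀ U : Set Z2, IsOpen U → U.Nonempty → 0 < μ₂ U)
    (hμ₂fin : ∀ K : Set Z2, IsCompact K → μ₂ K < ⊤)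
    (γ : Z1 → Z2) (hγ : Continuous γ)
    -- For every nonnegative smooth (= locally constant) compactly supported f, the pushforward
    -- γ_*(f μ₁) is absolutely continuous with respect to μ₂, with density in L^p for all p < ∞:
    (hpush : ∀ f : Z1 → ℝ, IsLocallyConstant f → HasCompactSupport f → 0 ≤ f →
      ∃ h : Z2 → ℝ≥0∞, Measurable h ∧
        Measure.map γ (μ₁.withDensity (fun x => ENNReal.ofReal (f x))) = μ₂.withDensity h ∧
        ∀ p : ℝ, 1 ≤ p → ∫⁻ y, h y ^ p ∂μ₂ < ⊤) :
    ∀ ε : ℝ, 0 < ε → ∀ g : Z2 → ℝ, 0 ≤ g →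
      MemLp g (ENNReal.ofReal (1 + ε)) μ₂ → LocallyIntegrable (g ∘ γ) μ₁ := by
  intro ε hε g hg hmem
  intro x
  -- find a compact open neighborhood V of x
  obtain ⟨K, hK, hKx⟩ := exists_compact_mem_nhds x
  obtain ⟨V, hVclopen, hxV, hVK⟩ :=
    (loc_compact_Haus_tot_disc_of_zero_dim (H := Z1)).mem_nhds_iff.1
      (mem_nhds_iff.2 ⟨interior K, Set.Subset.rfl, isOpen_interior, mem_interior_iff_mem_nhds.2 hKx⟩)
  have hVcomp : IsCompact V := hK.of_isClosed_subset hVclopen.isClosed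
    (hVK.trans interior_subset)
  have hVmeas : MeasurableSet V := hVclopen.isOpen.measurableSet
  -- the indicator function of V
  set f : Z1 → ℝ := V.indicator 1 with hf
  have hflc : IsLocallyConstant f := by
    rw [IsLocallyConstant.iff_exists_open]
    intro y
    by_cases hy : y ∈ V
    · exact ⟨V, hVclopen.isOpen, hy, fun z hz => by
        simp [hf, Set.indicator_of_mem hz, Set.indicator_of_mem hy]⟩
    · exact ⟨Vᶜ, hVclopen.isClosed.isOpen_compl, hy, fun z hz => by
        simp [hf, Set.indicator_of_notMem hz, Set.indicator_of_notMem hy]⟩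
  have hfsupp : HasCompactSupport f := by
    apply HasCompactSupport.intro hVcomp
    intro y hy
    simp [hf, Set.indicator_of_notMem hy]
  have hfnn : 0 ≤ f := fun y => Set.indicator_nonneg (fun _ _ => zero_le_one) y
  obtain ⟨h, hhmeas, hhmap, hhLp⟩ := hpush f hflc hfsupp hfnn
  -- the with-density measure is just the restriction to V
  have hdens : (μ₁.withDensity (fun x => ENNReal.ofReal (f x))) = μ₁.restrict V := by
    rw [← withDensity_indicator_one hVmeas]
    congr 1
    funext y
    by_cases hy : y ∈ V
    · simp [hf, Set.indicator_of_mem hy]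
    · simp [hf, Set.indicator_of_notMem hy]
  rw [hdens] at hhmap
  -- pick a measurable representative g' of g
  obtain ⟨g', hg'sm, hgg'⟩ := hmem.aestronglyMeasurable
  have hg'meas : Measurable g' := hg'sm.measurable
  -- a.e. equality of g∘γ and g'∘γ on μ₁.restrict V
  obtain ⟨N, hNsub, hNmeas, hNnull⟩ := exists_measurable_superset_of_null hgg'
  have hNnull' : (μ₁.restrict V) (γ ⁻¹' N) = 0 := by
    have : (Measure.map γ (μ₁.restrict V)) N = 0 := by
      rw [hhmap, withDensity_apply _ hNmeas]
      exact setLIntegral_measure_zero _ _ hNnull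
    rwa [Measure.map_apply hγ.measurable hNmeas] at this
  have haegγ : (g ∘ γ) =ᵐ[μ₁.restrict V] (g' ∘ γ) := by
    refine measure_mono_null ?_ hNnull'
    intro y hy
    simp only [Function.comp, Set.mem_setOf_eq] at hy ⊢
    exact hNsub hy
  -- conjugate exponent
  set q : ℝ := (1 + ε) / ε with hq
  have hpq : (1 + ε).HolderConjugate ((1 + ε) / ((1 + ε) - 1)) :=
    Real.HolderConjugate.conjExponent (by linarith)
  have hq' : (1 + ε) / ((1 + ε) - 1) = q := by rw [hq]; ring_nf
  rw [hq'] at hpq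
  have hq1 : 1 ≤ q := by
    rw [hq, le_div_iff₀ hε]; linarith
  -- finiteness of ∫ (g')^(1+ε)
  have hgLp : ∫⁻ y, (ENNReal.ofReal (g' y)) ^ (1 + ε) ∂μ₂ < ⊤ := by
    have h1 : ∫⁻ y, (ENNReal.ofReal (g' y)) ^ (1 + ε) ∂μ₂
        = ∫⁻ y, ‖g y‖ₑ ^ (1 + ε) ∂μ₂ := by
      refine lintegral_congr_ae ?_
      filter_upwards [hgg'] with y hy
      rw [← ofReal_norm, Real.norm_eq_abs,
        abs_of_nonneg (hg y), hy]
    rw [h1]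
    have hp0 : ENNReal.ofReal (1 + ε) ≠ 0 := by
      simp [ENNReal.ofReal_eq_zero]; linarith
    have hpt : ENNReal.ofReal (1 + ε) ≠ ⊤ := ENNReal.ofReal_ne_top
    have := hmem.eLpNorm_lt_top
    rw [eLpNorm_eq_lintegral_rpow_enorm_toReal hp0 hpt] at this
    have htr : (ENNReal.ofReal (1 + ε)).toReal = 1 + ε :=
      ENNReal.toReal_ofReal (by linarith)
    rw [htr] at this
    have hpos : (0:ℝ) < 1 / (1 + ε) := by positivity
    by_contra hcon
    push_neg at hcon
    rw [top_le_iff] at hcon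
    rw [hcon, ENNReal.top_rpow_of_pos hpos] at this
    exact (lt_irrefl _ this).elim
  -- Hölder
  have hholder := ENNReal.lintegral_mul_le_Lp_mul_Lq μ₂ hpq
    (f := fun y => ENNReal.ofReal (g' y)) (g := h)
    (ENNReal.measurable_ofReal.comp hg'meas).aemeasurable hhmeas.aemeasurable
  have hfin : ∫⁻ y, ENNReal.ofReal (g' y) * h y ∂μ₂ < ⊤ := by
    refine lt_of_le_of_lt hholder ?_
    exact ENNReal.mul_lt_top
      (ENNReal.rpow_lt_top_of_nonneg (by positivity) hgLp.ne)
      (ENNReal.rpow_lt_top_of_nonneg (by positivity) (hhLp q hq1).ne)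
  -- compute the integral over V
  have hkey : ∫⁻ y, ‖(g ∘ γ) y‖ₑ ∂(μ₁.restrict V) < ⊤ := by
    have h1 : ∫⁻ y, ‖(g ∘ γ) y‖ₑ ∂(μ₁.restrict V)
        = ∫⁻ y, ENNReal.ofReal (g' (γ y)) ∂(μ₁.restrict V) := by
      refine lintegral_congr_ae ?_
      filter_upwards [haegγ] with y hy
      simp only [Function.comp] at hy ⊢
      rw [← ofReal_norm, Real.norm_eq_abs, abs_of_nonneg (hg _), hy]
    have h2 : ∫⁻ y, ENNReal.ofReal (g' (γ y)) ∂(μ₁.restrict V)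
        = ∫⁻ z, ENNReal.ofReal (g' z) ∂(Measure.map γ (μ₁.restrict V)) :=
      (lintegral_map (ENNReal.measurable_ofReal.comp hg'meas) hγ.measurable).symm
    have h3 : ∫⁻ z, ENNReal.ofReal (g' z) ∂(μ₂.withDensity h)
        = ∫⁻ z, h z * ENNReal.ofReal (g' z) ∂μ₂ :=
      lintegral_withDensity_eq_lintegral_mul μ₂ hhmeas
        (ENNReal.measurable_ofReal.comp hg'meas)
    rw [h1, h2, hhmap, h3]
    simpa [mul_comm] using hfin
  -- conclude
  refine ⟨V, hVclopen.isOpen.mem_nhds hxV, ?_⟩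
  refine ⟨?_, hkey⟩
  exact ((hg'sm.comp_measurable hγ.measurable).aestronglyMeasurable.congr haegγ.symm)
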